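/- Let X be a Banach space, H = [0, b] a compact interval, and C(H; X) the Banach space of continuous functions from H to X with the supremum norm. Let χ denote the Hausdorff measure of noncompactness on X. If A ⊆ C(H; X) is bounded and equicontinuous, then for all t ∈ H, χ(∫₀ᵗ A(s) ds) ≤ ∫₀ᵗ χ(A(s)) ds, where ∫₀ᵗ A(s) ds = {∫₀ᵗ x(s) ds : x ∈ A} ⊆ X (Bochner integrals) and A(s) = {y(s) : y ∈ A}. -/

import Mathlib

open Bornology Filter Topology

/-- The Hausdorff measure of noncompactness of a subset `B` of a metric space `Y`:
the infimum of all `ε > 0` such that `B` can be covered by finitely many balls of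
radius `ε` with centers in `Y`. -/
noncomputable def hausdorffMNC (Y : Type*) [PseudoMetricSpace Y] (B : Set Y) : ℝ :=
  sInf {ε : ℝ | 0 < ε ∧ ∃ S : Finset Y, B ⊆ ⋃ c ∈ S, Metric.ball c ε}

open Pointwise Metric

section MNC
set_option linter.unusedSectionVars false
variable {Y : Type*} [NormedAddCommGroup Y] [NormedSpace ℝ Y]

lemma mnc_nonneg (B : Set Y) : 0 ≤ hausdorffMNC Y B :=
  Real.sInf_nonneg fun _ hx => hx.1.le

lemma mnc_bddBelow (B : Set Y) :
    BddBelow {ε : ℝ | 0 < ε ∧ ∃ S : Finset Y, B ⊆ ⋃ c ∈ S, Metric.ball c ε} :=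
  ⟨0, fun _ hx => hx.1.le⟩

lemma mnc_set_nonempty {B : Set Y} (hB : IsBounded B) :
    {ε : ℝ | 0 < ε ∧ ∃ S : Finset Y, B ⊆ ⋃ c ∈ S, Metric.ball c ε}.Nonempty := by
  obtain ⟨r, hr, hsub⟩ := hB.subset_ball_lt 0 0
  exact ⟨r, hr, {0}, by simpa using hsub⟩

lemma mnc_le {B : Set Y} {M : ℝ} (hM : 0 ≤ M)
    (h : ∀ η > (0:ℝ), ∃ S : Finset Y, B ⊆ ⋃ c ∈ S, Metric.ball c (M + η)) :
    hausdorffMNC Y B ≤ M := by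
  refine le_of_forall_pos_le_add fun η hη => ?_
  exact csInf_le (mnc_bddBelow B) ⟨by linarith, h η hη⟩

lemma mnc_cover {B : Set Y} (hB : IsBounded B) {r : ℝ} (hr : hausdorffMNC Y B < r) :
    ∃ S : Finset Y, B ⊆ ⋃ c ∈ S, Metric.ball c r := by
  obtain ⟨ε, hε, hlt⟩ := exists_lt_of_csInf_lt (mnc_set_nonempty hB) hr
  obtain ⟨hpos, S, hS⟩ := hε
  exact ⟨S, hS.trans (Set.iUnion₂_mono fun c _ => Metric.ball_subset_ball hlt.le)⟩

lemma mnc_mono {B C : Set Y} (hC : IsBounded C) (h : B ⊆ C) :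
    hausdorffMNC Y B ≤ hausdorffMNC Y C := by
  apply csInf_le_csInf (mnc_bddBelow B) (mnc_set_nonempty hC)
  rintro ε ⟨hε, S, hS⟩
  exact ⟨hε, S, h.trans hS⟩

lemma mnc_subset_singleton {B : Set Y} {y : Y} (h : B ⊆ {y}) : hausdorffMNC Y B ≤ 0 := by
  refine mnc_le le_rfl fun η hη => ⟨{y}, fun x hx => ?_⟩
  have hxy : x = y := h hx
  subst hxy
  simp [Metric.mem_ball, hη]

lemma mnc_add_le {B C : Set Y} (hB : IsBounded B) (hC : IsBounded C) :
    hausdorffMNC Y (B + C) ≤ hausdorffMNC Y B + hausdorffMNC Y C := by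
  classical
  refine mnc_le (add_nonneg (mnc_nonneg B) (mnc_nonneg C)) fun η hη => ?_
  obtain ⟨S₁, hS₁⟩ := mnc_cover hB (lt_add_of_pos_right _ (by linarith : (0:ℝ) < η/2))
  obtain ⟨S₂, hS₂⟩ := mnc_cover hC (lt_add_of_pos_right _ (by linarith : (0:ℝ) < η/2))
  refine ⟨(S₁ ×ˢ S₂).image fun p => p.1 + p.2, ?_⟩
  rintro x ⟨u, hu, v, hv, rfl⟩
  obtain ⟨c₁, hc₁S, hc₁⟩ := Set.mem_iUnion₂.1 (hS₁ hu)
  obtain ⟨c₂, hc₂S, hc₂⟩ := Set.mem_iUnion₂.1 (hS₂ hv)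
  refine Set.mem_iUnion₂.2 ⟨c₁ + c₂, Finset.mem_image.2 ⟨(c₁, c₂), Finset.mem_product.2 ⟨hc₁S, hc₂S⟩, rfl⟩, ?_⟩
  rw [Metric.mem_ball] at *
  calc dist (u + v) (c₁ + c₂) ≤ dist u c₁ + dist v c₂ := dist_add_add_le _ _ _ _
    _ < _ := by linarith

lemma mnc_smul_le {B : Set Y} (hB : IsBounded B) {a : ℝ} (ha : 0 ≤ a) :
    hausdorffMNC Y (a • B) ≤ a * hausdorffMNC Y B := by
  rcases eq_or_lt_of_le ha with rfl | ha'
  · rcases B.eq_empty_or_nonempty with rfl | hne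
    · simpa using mnc_subset_singleton (y := (0:Y)) (by simp)
    · rw [Set.zero_smul_set hne, zero_mul]
      exact mnc_subset_singleton le_rfl
  · classical
    refine mnc_le (mul_nonneg ha (mnc_nonneg B)) fun η hη => ?_
    obtain ⟨S, hS⟩ := mnc_cover hB (lt_add_of_pos_right _ (div_pos hη ha') :
      hausdorffMNC Y B < hausdorffMNC Y B + η / a)
    refine ⟨S.image (a • ·), ?_⟩
    rintro x ⟨u, hu, rfl⟩
    obtain ⟨c, hcS, hc⟩ := Set.mem_iUnion₂.1 (hS hu)
    refine Set.mem_iUnion₂.2 ⟨a • c, Finset.mem_image.2 ⟨c, hcS, rfl⟩, ?_⟩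
    rw [Metric.mem_ball] at *
    rw [dist_smul₀, Real.norm_of_nonneg ha]
    calc a * dist u c < a * (hausdorffMNC Y B + η / a) := by
          exact mul_lt_mul_of_pos_left hc ha'
      _ = a * hausdorffMNC Y B + η := by field_simp
  
lemma mnc_closedBall_le {r : ℝ} (hr : 0 ≤ r) :
    hausdorffMNC Y (Metric.closedBall (0:Y) r) ≤ r := by
  refine mnc_le hr fun η hη => ⟨{0}, fun x hx => ?_⟩
  simp only [Metric.mem_closedBall] at hx
  simp only [Finset.mem_singleton, Set.iUnion_iUnion_eq_left, Metric.mem_ball]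
  linarith

lemma mnc_le_add_of_subset {B C : Set Y} (hC : IsBounded C) {ε : ℝ} (hε : 0 ≤ ε)
    (h : B ⊆ C + Metric.closedBall 0 ε) :
    hausdorffMNC Y B ≤ hausdorffMNC Y C + ε :=
  calc hausdorffMNC Y B ≤ hausdorffMNC Y (C + Metric.closedBall 0 ε) :=
        mnc_mono (hC.add isBounded_closedBall) h
    _ ≤ hausdorffMNC Y C + hausdorffMNC Y (Metric.closedBall (0:Y) ε) :=
        mnc_add_le hC isBounded_closedBall
    _ ≤ hausdorffMNC Y C + ε := by linarith [mnc_closedBall_le (Y := Y) hε]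

lemma isBounded_finsetSum {ι : Type*} (s : Finset ι) (C : ι → Set Y)
    (h : ∀ i ∈ s, IsBounded (C i)) : IsBounded (∑ i ∈ s, C i) := by
  induction s using Finset.cons_induction with
  | empty => rw [Finset.sum_empty, ← Set.singleton_zero]; exact isBounded_singleton
  | cons i s hi ih =>
      rw [Finset.sum_cons]
      exact (h i (Finset.mem_cons_self i s)).add (ih fun j hj => h j (Finset.mem_cons_of_mem hj))

lemma mnc_sum_le {ι : Type*} (s : Finset ι) (C : ι → Set Y)
    (h : ∀ i ∈ s, IsBounded (C i)) :
    hausdorffMNC Y (∑ i ∈ s, C i) ≤ ∑ i ∈ s, hausdorffMNC Y (C i) := by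
  induction s using Finset.cons_induction with
  | empty =>
      rw [Finset.sum_empty, Finset.sum_empty, ← Set.singleton_zero]
      exact mnc_subset_singleton le_rfl
  | cons i s hi ih =>
      rw [Finset.sum_cons, Finset.sum_cons]
      calc hausdorffMNC Y (C i + ∑ j ∈ s, C j)
          ≤ hausdorffMNC Y (C i) + hausdorffMNC Y (∑ j ∈ s, C j) :=
            mnc_add_le (h i (Finset.mem_cons_self i s))
              (isBounded_finsetSum s C fun j hj => h j (Finset.mem_cons_of_mem hj))
        _ ≤ _ := by
            have := ih fun j hj => h j (Finset.mem_cons_of_mem hj)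
            linarith

lemma sum_mem_finsetSum {ι : Type*} (s : Finset ι) (C : ι → Set Y) (f : ι → Y)
    (h : ∀ i ∈ s, f i ∈ C i) : (∑ i ∈ s, f i) ∈ ∑ i ∈ s, C i := by
  induction s using Finset.cons_induction with
  | empty =>
      rw [Finset.sum_empty, Finset.sum_empty, ← Set.singleton_zero]
      exact rfl
  | cons i s hi ih =>
      rw [Finset.sum_cons, Finset.sum_cons]
      exact Set.add_mem_add (h i (Finset.mem_cons_self i s))
        (ih fun j hj => h j (Finset.mem_cons_of_mem hj))

end MNC

/-- If `A ⊆ C([0,b]; X)` is bounded and equicontinuous, then for all `t ∈ [0,b]`,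
`χ (∫₀ᵗ A(s) ds) ≤ ∫₀ᵗ χ (A s) ds`, where `∫₀ᵗ A(s) ds = {∫₀ᵗ x(s) ds : x ∈ A}`.
(Functions on `[0,b]` are integrated over `[0,t]` via the retraction `projIcc`.) -/
theorem hausdorffMNC_integral_le
    {X : Type*} [NormedAddCommGroup X] [NormedSpace ℝ X] [CompleteSpace X]
    {b : ℝ} (hb : 0 < b)
    (A : Set C(Set.Icc (0:ℝ) b, X)) (hA : IsBounded A)
    (hequi : ∀ ε > (0:ℝ), ∃ δ > (0:ℝ), ∀ y ∈ A, ∀ t s : Set.Icc (0:ℝ) b,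
      |(t : ℝ) - (s : ℝ)| < δ → ‖y t - y s‖ < ε) :
    ∀ t ∈ Set.Icc (0:ℝ) b,
      hausdorffMNC X
          ((fun x : C(Set.Icc (0:ℝ) b, X) =>
            ∫ s in (0:ℝ)..t, x (Set.projIcc 0 b hb.le s)) '' A) ≤
        ∫ s in (0:ℝ)..t,
          hausdorffMNC X ((fun y : C(Set.Icc (0:ℝ) b, X) =>
            y (Set.projIcc 0 b hb.le s)) '' A) := by
  classical
  intro t ht
  set proj : ℝ → Set.Icc (0:ℝ) b := Set.projIcc 0 b hb.le with hprojdef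
  set g : ℝ → ℝ := fun s =>
    hausdorffMNC X ((fun y : C(Set.Icc (0:ℝ) b, X) => y (proj s)) '' A) with hgdef
  obtain ⟨R, hR⟩ := hA.subset_closedBall 0
  have hAs : ∀ u : Set.Icc (0:ℝ) b,
      IsBounded ((fun y : C(Set.Icc (0:ℝ) b, X) => y u) '' A) := by
    intro u
    apply (isBounded_closedBall (x := (0:X)) (r := R)).subset
    rintro _ ⟨y, hy, rfl⟩
    have h1 : ‖y‖ ≤ R := by simpa [dist_eq_norm] using hR hy
    simpa [Metric.mem_closedBall, dist_eq_norm] using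
      (ContinuousMap.norm_coe_le_norm y u).trans h1
  have hlip : ∀ u v : ℝ, |((proj u : ℝ)) - ((proj v : ℝ))| ≤ |u - v| := by
    intro u v
    have := (LipschitzWith.projIcc (a := (0:ℝ)) (b := b) hb.le).dist_le_mul u v
    simpa [Subtype.dist_eq, Real.dist_eq] using this
  have hgpt : ∀ ε > (0:ℝ), ∃ δ > (0:ℝ), ∀ u v : ℝ, |u - v| < δ → g u ≤ g v + ε := by
    intro ε hε
    obtain ⟨δ, hδ, hδ'⟩ := hequi ε hε
    refine ⟨δ, hδ, fun u v huv => ?_⟩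
    refine mnc_le_add_of_subset (hAs (proj v)) hε.le ?_
    rintro _ ⟨y, hy, rfl⟩
    refine Set.mem_add.2 ⟨y (proj v), ⟨y, hy, rfl⟩, y (proj u) - y (proj v), ?_, by abel⟩
    have := hδ' y hy (proj u) (proj v) (lt_of_le_of_lt (hlip u v) huv)
    simpa [Metric.mem_closedBall, dist_eq_norm] using this.le
  have hgucont : UniformContinuous g := by
    refine Metric.uniformContinuous_iff.2 fun ε hε => ?_
    obtain ⟨δ, hδ, hkey⟩ := hgpt (ε/2) (by linarith)
    refine ⟨δ, hδ, fun {u v} huv => ?_⟩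
    rw [Real.dist_eq] at huv ⊢
    have h1 := hkey u v huv
    have h2 := hkey v u (by rwa [abs_sub_comm])
    rw [abs_sub_lt_iff]
    constructor <;> linarith
  have hgcont : Continuous g := hgucont.continuous
  refine le_of_forall_pos_le_add fun ε hε => ?_
  rcases eq_or_lt_of_le ht.1 with hteq | htpos
  · -- t = 0 : both sides vanish
    have h0 : (fun x : C(Set.Icc (0:ℝ) b, X) =>
        ∫ s in (0:ℝ)..t, x (proj s)) '' A ⊆ {0} := by
      rintro _ ⟨x, hx, rfl⟩
      simp [← hteq]
    have h1 := mnc_subset_singleton h0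
    have h2 : (∫ s in (0:ℝ)..t, g s) = 0 := by simp [← hteq]
    rw [h2]
    linarith
  · -- t > 0
    set ε' := ε / (2 * t) with hε'def
    have hε' : 0 < ε' := by
      apply div_pos hε; linarith
    obtain ⟨δ₁, hδ₁, hδ₁'⟩ := hequi ε' hε'
    obtain ⟨δ₂, hδ₂, hkey⟩ := hgpt ε' hε'
    set δ := min δ₁ δ₂ with hδdef
    have hδ : 0 < δ := lt_min hδ₁ hδ₂
    set n : ℕ := ⌈t / δ⌉₊ + 1 with hndef
    have hn0 : (0:ℝ) < n := by positivity
    set Δ := t / n with hΔdef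
    have hΔpos : 0 < Δ := div_pos htpos hn0
    have hΔδ : Δ < δ := by
      rw [hΔdef, div_lt_iff₀ hn0]
      have h1 : t / δ < (n:ℝ) := by
        calc t / δ ≤ (⌈t / δ⌉₊ : ℝ) := Nat.le_ceil _
          _ < (n:ℝ) := by rw [hndef]; exact_mod_cast Nat.lt_succ_self _
      calc t = δ * (t / δ) := by field_simp
        _ < δ * n := mul_lt_mul_of_pos_left h1 hδ
    have hnΔ : (n:ℝ) * Δ = t := by rw [hΔdef]; field_simp
    set a : ℕ → ℝ := fun i => i * Δ with hadef
    have ha0 : a 0 = 0 := by simp [hadef]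
    have han : a n = t := by rw [hadef]; exact hnΔ
    have hastep : ∀ i : ℕ, a (i+1) - a i = Δ := by
      intro i; simp only [hadef]; push_cast; ring
    have hamono : ∀ i : ℕ, a i ≤ a (i+1) := by
      intro i; have := hastep i; linarith
    have hcontcomp : ∀ x : C(Set.Icc (0:ℝ) b, X), Continuous fun s : ℝ => x (proj s) :=
      fun x => x.continuous.comp (LipschitzWith.projIcc (a := (0:ℝ)) hb.le).continuous
    have hinteg : ∀ (x : C(Set.Icc (0:ℝ) b, X)) (u v : ℝ),
        IntervalIntegrable (fun s => x (proj s)) MeasureTheory.volume u v :=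
      fun x u v => (hcontcomp x).intervalIntegrable u v
    have hginteg : ∀ u v : ℝ, IntervalIntegrable g MeasureTheory.volume u v :=
      fun u v => hgcont.intervalIntegrable u v
    set C : ℕ → Set X :=
      fun i => Δ • ((fun y : C(Set.Icc (0:ℝ) b, X) => y (proj (a i))) '' A) with hCdef
    have hCbdd : ∀ i, IsBounded (C i) := fun i => (hAs (proj (a i))).smul₀ Δ
    -- Step 1: the image is within ε' * t of the Riemann-sum set
    have hsub : (fun x : C(Set.Icc (0:ℝ) b, X) => ∫ s in (0:ℝ)..t, x (proj s)) '' A ⊆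
        (∑ i ∈ Finset.range n, C i) + Metric.closedBall 0 (ε' * t) := by
      rintro _ ⟨x, hx, rfl⟩
      show (∫ s in (0:ℝ)..t, x (proj s)) ∈ (∑ i ∈ Finset.range n, C i) + Metric.closedBall 0 (ε' * t)
      have hdecomp : (∫ s in (0:ℝ)..t, x (proj s)) =
          ∑ i ∈ Finset.range n, ∫ s in a i..a (i+1), x (proj s) := by
        rw [intervalIntegral.sum_integral_adjacent_intervals (fun i _ => hinteg x _ _),
          ha0, han]
      set p := ∑ i ∈ Finset.range n, Δ • x (proj (a i)) with hpdef
      have hpmem : p ∈ ∑ i ∈ Finset.range n, C i :=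
        sum_mem_finsetSum _ _ _ fun i _ => Set.smul_mem_smul_set ⟨x, hx, rfl⟩
      have herr : ∀ i ∈ Finset.range n,
          ‖(∫ s in a i..a (i+1), x (proj s)) - Δ • x (proj (a i))‖ ≤ ε' * Δ := by
        intro i _
        have hconst : Δ • x (proj (a i)) = ∫ s in a i..a (i+1), (x (proj (a i)) : X) := by
          rw [intervalIntegral.integral_const, hastep i]
        rw [hconst, ← intervalIntegral.integral_sub (hinteg x _ _) intervalIntegrable_const]
        have hbound : ∀ s ∈ Set.uIoc (a i) (a (i+1)),
            ‖x (proj s) - x (proj (a i))‖ ≤ ε' := by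
          intro s hs
          rw [Set.uIoc_of_le (hamono i)] at hs
          have hs1 : |s - a i| < δ := by
            rw [abs_of_pos (by linarith [hs.1])]
            have := hastep i
            linarith [hs.2]
          exact (hδ₁' x hx (proj s) (proj (a i))
            (lt_of_le_of_lt (hlip s (a i)) (hs1.trans_le (min_le_left _ _)))).le
        calc ‖∫ s in a i..a (i+1), (x (proj s) - x (proj (a i)))‖
            ≤ ε' * |a (i+1) - a i| :=
              intervalIntegral.norm_integral_le_of_norm_le_const hbound
          _ = ε' * Δ := by rw [hastep i, abs_of_pos hΔpos]
      rw [hdecomp]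
      refine Set.mem_add.2 ⟨p, hpmem,
        (∑ i ∈ Finset.range n, ∫ s in a i..a (i+1), x (proj s)) - p, ?_, by abel⟩
      rw [Metric.mem_closedBall, dist_zero_right, hpdef, ← Finset.sum_sub_distrib]
      calc ‖∑ i ∈ Finset.range n,
              ((∫ s in a i..a (i+1), x (proj s)) - Δ • x (proj (a i)))‖
          ≤ ∑ i ∈ Finset.range n,
              ‖(∫ s in a i..a (i+1), x (proj s)) - Δ • x (proj (a i))‖ :=
            norm_sum_le _ _
        _ ≤ ∑ _i ∈ Finset.range n, ε' * Δ := Finset.sum_le_sum herr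
        _ = (n:ℝ) * (ε' * Δ) := by
            rw [Finset.sum_const, Finset.card_range, nsmul_eq_mul]
        _ = ε' * t := by rw [← hnΔ]; ring
    -- Step 2: MNC estimate via the Riemann-sum set
    have step2 : hausdorffMNC X
        ((fun x : C(Set.Icc (0:ℝ) b, X) => ∫ s in (0:ℝ)..t, x (proj s)) '' A) ≤
        (∑ i ∈ Finset.range n, Δ * g (a i)) + ε' * t := by
      have h1 := mnc_le_add_of_subset
        (isBounded_finsetSum (Finset.range n) C fun i _ => hCbdd i)
        (by positivity) hsub
      have h2 := mnc_sum_le (Finset.range n) C fun i _ => hCbdd i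
      have h3 : ∑ i ∈ Finset.range n, hausdorffMNC X (C i) ≤
          ∑ i ∈ Finset.range n, Δ * g (a i) :=
        Finset.sum_le_sum fun i _ => mnc_smul_le (hAs _) hΔpos.le
      linarith
    -- Step 3: the Riemann sum is below the integral plus ε' * t
    have step3 : (∑ i ∈ Finset.range n, Δ * g (a i)) ≤ (∫ s in (0:ℝ)..t, g s) + ε' * t := by
      have hint : (∫ s in (0:ℝ)..t, g s) =
          ∑ i ∈ Finset.range n, ∫ s in a i..a (i+1), g s := by
        rw [intervalIntegral.sum_integral_adjacent_intervals (fun i _ => hginteg _ _),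
          ha0, han]
      have hpiece : ∀ i ∈ Finset.range n,
          Δ * (g (a i) - ε') ≤ ∫ s in a i..a (i+1), g s := by
        intro i _
        have hmono : ∀ s ∈ Set.Icc (a i) (a (i+1)), g (a i) - ε' ≤ g s := by
          intro s hs
          have habs : |a i - s| < δ := by
            rw [abs_sub_comm, abs_of_nonneg (by linarith [hs.1])]
            have := hastep i
            linarith [hs.2]
          have := hkey (a i) s (habs.trans_le (min_le_right _ _))
          linarith
        have := intervalIntegral.integral_mono_on (hamono i)
          intervalIntegrable_const (hginteg _ _) hmono
        rwa [intervalIntegral.integral_const, hastep i, smul_eq_mul] at this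
      have hsumle : ∑ i ∈ Finset.range n, Δ * (g (a i) - ε') ≤ ∫ s in (0:ℝ)..t, g s := by
        rw [hint]; exact Finset.sum_le_sum hpiece
      have heq : ∑ i ∈ Finset.range n, Δ * (g (a i) - ε') =
          (∑ i ∈ Finset.range n, Δ * g (a i)) - ε' * t := by
        have h4 : ∑ i ∈ Finset.range n, Δ * (g (a i) - ε') =
            ∑ i ∈ Finset.range n, (Δ * g (a i) - Δ * ε') :=
          Finset.sum_congr rfl fun i _ => by ring
        rw [h4, Finset.sum_sub_distrib, Finset.sum_const, Finset.card_range, nsmul_eq_mul,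
          ← hnΔ]
        ring
      linarith
    have hεt : ε' * t + ε' * t = ε := by
      rw [hε'def]; field_simp; ring
    linarith
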